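/- Let J and P be k×k integer matrices with det(J) = ±1, Jᵀ = -J, and PᵀJP = J (so P is invertible over ℤ). Then for all x, w, y, v ∈ Λ^k: (i) ((tP - I)x)ᵀ · J · (t⁻¹P - I)⁻¹ · w̄ = -t·xᵀJP⁻¹w̄ ∈ Λ, and (ii) vᵀ · J · (t⁻¹P - I)⁻¹ · conj((tP - I)y) = vᵀJȳ ∈ Λ. Consequently the pairing (v,w) ↦ vᵀJ(t⁻¹P - I)⁻¹w̄ ∈ Q/Λ is well defined on the quotient module Λ^k/(tP - I)Λ^k in both variables. -/

import Mathlib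

open Matrix

set_option maxHeartbeats 2000000
set_option synthInstance.maxHeartbeats 2000000

noncomputable def tQ : RatFunc ℚ := RatFunc.X

noncomputable def conjQ : RatFunc ℚ → RatFunc ℚ :=
  RatFunc.eval (algebraMap ℚ (RatFunc ℚ)) tQ⁻¹

noncomputable def Lam : Subring (RatFunc ℚ) := Subring.closure {tQ, tQ⁻¹}

lemma tQ_ne_zero : tQ ≠ 0 := RatFunc.X_ne_zero

lemma transcendental_tQ : Transcendental ℚ tQ := by
  have h := (transcendental_algebraMap_iff (S := Polynomial ℚ) (A := RatFunc ℚ)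
      (RatFunc.algebraMap_injective ℚ)).2 (Polynomial.transcendental_X ℚ)
  simpa [tQ, RatFunc.algebraMap_X] using h

lemma transcendental_tQinv : Transcendental ℚ tQ⁻¹ :=
  fun h => transcendental_tQ (by simpa using h.inv)

noncomputable def sig : RatFunc ℚ →ₐ[ℚ] RatFunc ℚ :=
  (RatFunc.liftRingHom (Polynomial.aeval tQ⁻¹).toRingHom
    (nonZeroDivisors_le_comap_nonZeroDivisors_of_injective _
      (transcendental_iff_injective.mp transcendental_tQinv))).toRatAlgHom

lemma conjQ_eq (p : RatFunc ℚ) : conjQ p = sig p := by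
  conv_rhs => rw [← RatFunc.num_div_denom p]
  rw [sig, RingHom.toRatAlgHom_apply, RatFunc.liftRingHom_apply_div]
  simp only [conjQ, RatFunc.eval, Polynomial.aeval_def, AlgHom.toRingHom_eq_coe, AlgHom.coe_toRingHom]

lemma sig_tQ : sig tQ = tQ⁻¹ := by
  rw [← conjQ_eq]; simp [conjQ, tQ]

lemma sig_tQinv : sig tQ⁻¹ = tQ := by
  rw [map_inv₀, sig_tQ, inv_inv]

lemma tQ_mem : tQ ∈ Lam := Subring.subset_closure (Set.mem_insert _ _)

lemma tQinv_mem : tQ⁻¹ ∈ Lam := Subring.subset_closure (Set.mem_insert_iff.2 (Or.inr rfl))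

lemma conjQ_mem {z : RatFunc ℚ} (hz : z ∈ Lam) : conjQ z ∈ Lam := by
  rw [conjQ_eq]
  induction hz using Subring.closure_induction with
  | mem a ha =>
    rcases ha with rfl | ha
    · rw [sig_tQ]; exact tQinv_mem
    · rw [Set.mem_singleton_iff] at ha; subst ha; rw [sig_tQinv]; exact tQ_mem
  | one => rw [_root_.map_one]; exact Subring.one_mem _
  | zero => rw [_root_.map_zero]; exact Subring.zero_mem _
  | add a b _ _ ha hb => rw [_root_.map_add]; exact Subring.add_mem _ ha hb
  | neg a _ ha => rw [_root_.map_neg]; exact Subring.neg_mem _ ha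
  | mul a b _ _ ha hb => rw [_root_.map_mul]; exact Subring.mul_mem _ ha hb
lemma dot_mem {k : ℕ} {u v : Fin k → RatFunc ℚ} (hu : ∀ i, u i ∈ Lam) (hv : ∀ i, v i ∈ Lam) :
    u ⬝ᵥ v ∈ Lam :=
  Subring.sum_mem _ fun i _ => Subring.mul_mem _ (hu i) (hv i)

lemma mulVec_map_mem {k : ℕ} (M : Matrix (Fin k) (Fin k) ℤ) {v : Fin k → RatFunc ℚ}
    (hv : ∀ i, v i ∈ Lam) (i : Fin k) :
    ((M.map (Int.cast : ℤ → RatFunc ℚ)) *ᵥ v) i ∈ Lam := by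
  have h : ((M.map (Int.cast : ℤ → RatFunc ℚ)) *ᵥ v) i
      = ∑ j, ((M i j : ℤ) : RatFunc ℚ) * v j := by
    simp [Matrix.mulVec, dotProduct, Matrix.map_apply]
  rw [h]
  exact Subring.sum_mem _ fun j _ =>
    Subring.mul_mem _ (intCast_mem Lam (M i j)) (hv j)

theorem fibred_blanchfield_well_defined (k : ℕ)
    (J P : Matrix (Fin k) (Fin k) ℤ)
    (hJ : J.det = 1 ∨ J.det = -1) (hJskew : Jᵀ = -J) (hP : Pᵀ * J * P = J)
    (J' P' : Matrix (Fin k) (Fin k) (RatFunc ℚ))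
    (hJ' : J' = J.map Int.cast) (hP' : P' = P.map Int.cast)
    (x w y v : Fin k → RatFunc ℚ)
    (hx : ∀ i, x i ∈ Lam) (hw : ∀ i, w i ∈ Lam) (hy : ∀ i, y i ∈ Lam) (hv : ∀ i, v i ∈ Lam) :
    -- (i)
    (((tQ • P' - 1).mulVec x) ⬝ᵥ
        (J' * (tQ⁻¹ • P' - 1)⁻¹).mulVec (fun i => conjQ (w i)) =
      -tQ * (x ⬝ᵥ (J' * P'⁻¹).mulVec (fun i => conjQ (w i))))
    ∧ (((tQ • P' - 1).mulVec x) ⬝ᵥ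
        (J' * (tQ⁻¹ • P' - 1)⁻¹).mulVec (fun i => conjQ (w i)) ∈ Lam)
    -- (ii)
    ∧ (v ⬝ᵥ (J' * (tQ⁻¹ • P' - 1)⁻¹).mulVec
          (fun i => conjQ (((tQ • P' - 1).mulVec y) i)) =
        v ⬝ᵥ J'.mulVec (fun i => conjQ (y i)))
    ∧ (v ⬝ᵥ (J' * (tQ⁻¹ • P' - 1)⁻¹).mulVec
          (fun i => conjQ (((tQ • P' - 1).mulVec y) i)) ∈ Lam) := by
  -- determinant of P is ±1
  have hJd : J.det ≠ 0 := by rcases hJ with h | h <;> simp [h]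
  have h1 : P.det * P.det = 1 := by
    have hd := congrArg Matrix.det hP
    rw [Matrix.det_mul, Matrix.det_mul, Matrix.det_transpose] at hd
    have : P.det * P.det * J.det = 1 * J.det := by ring_nf; linear_combination hd
    exact mul_right_cancel₀ hJd this
  have hPu : IsUnit P.det := IsUnit.of_mul_eq_one _ h1
  -- P' is invertible
  have hP'detEq : P'.det = ((P.det : ℤ) : RatFunc ℚ) := by
    rw [hP']
    exact ((Int.castRingHom (RatFunc ℚ)).map_det P).symm
  have hP'u : IsUnit P'.det := by
    rw [hP'detEq]
    exact IsUnit.of_mul_eq_one ((P.det : RatFunc ℚ)) (by rw [← Int.cast_mul, h1, Int.cast_one])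
  -- D := tQ • 1 - P' has nonzero determinant
  set D : Matrix (Fin k) (Fin k) (RatFunc ℚ) := tQ • (1 : Matrix (Fin k) (Fin k) (RatFunc ℚ)) - P' with hD
  have hmat : ((charmatrix (P.map (Int.cast : ℤ → ℚ))).map (algebraMap (Polynomial ℚ) (RatFunc ℚ)))
      = D := by
    ext i j
    by_cases h : i = j
    · subst h
      simp [charmatrix_apply_eq, hP', hD, tQ, RatFunc.algebraMap_X, Matrix.map_apply,
        Matrix.sub_apply, Matrix.smul_apply, Matrix.one_apply_eq, smul_eq_mul, map_sub,
        Polynomial.algebraMap_eq, map_intCast]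
    · simp [charmatrix_apply_ne _ _ _ h, hP', hD, Matrix.map_apply, Matrix.sub_apply,
        Matrix.smul_apply, Matrix.one_apply_ne h, smul_eq_mul, map_neg,
        Polynomial.algebraMap_eq, map_intCast]
  have hDdet : D.det ≠ 0 := by
    rw [← hmat, ← RingHom.mapMatrix_apply, ← RingHom.map_det]
    intro h
    exact (Matrix.charpoly_monic (P.map (Int.cast : ℤ → ℚ))).ne_zero
      (RatFunc.algebraMap_injective ℚ (h.trans (map_zero _).symm))
  have hDu : IsUnit D.det := isUnit_iff_ne_zero.2 hDdet
  -- A := tQ⁻¹ • P' - 1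
  have hAD : tQ⁻¹ • P' - 1 = (-tQ⁻¹) • D := by
    rw [hD, smul_sub, smul_smul, neg_mul, inv_mul_cancel₀ tQ_ne_zero, neg_smul, neg_smul,
      one_smul, sub_neg_eq_add, neg_add_eq_sub]
  have hAdet : IsUnit (tQ⁻¹ • P' - 1).det := by
    rw [hAD, Matrix.det_smul]
    exact isUnit_iff_ne_zero.2 (mul_ne_zero
      (pow_ne_zero _ (neg_ne_zero.2 (inv_ne_zero tQ_ne_zero))) hDdet)
  have hAinv : (tQ⁻¹ • P' - 1)⁻¹ = (-tQ) • D⁻¹ := by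
    apply Matrix.inv_eq_right_inv
    rw [hAD, Matrix.smul_mul, Matrix.mul_smul, smul_smul, neg_mul_neg,
      inv_mul_cancel₀ tQ_ne_zero, one_smul, Matrix.mul_nonsing_inv _ hDu]
  -- mapped symplectic relation
  have mapmul : ∀ M N : Matrix (Fin k) (Fin k) ℤ,
      (M * N).map (Int.cast : ℤ → RatFunc ℚ) = M.map Int.cast * N.map Int.cast := by
    intro M N
    ext i j
    simp only [Matrix.map_apply, Matrix.mul_apply]
    push_cast
    rfl
  have maptrans : ∀ M : Matrix (Fin k) (Fin k) ℤ,
      (Mᵀ).map (Int.cast : ℤ → RatFunc ℚ) = (M.map Int.cast)ᵀ := by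
    intro M; ext i j; simp [Matrix.map_apply]
  have hPJ' : P'ᵀ * J' * P' = J' := by
    rw [hJ', hP', ← maptrans, ← mapmul, ← mapmul, hP]
  have hPt : P'ᵀ * J' = J' * P'⁻¹ := by
    have h2 := congrArg (fun M => M * P'⁻¹) hPJ'
    simpa [Matrix.mul_assoc, Matrix.mul_nonsing_inv _ hP'u] using h2
  have hBJ : (tQ • P' - 1)ᵀ * J' = J' * P'⁻¹ * D := by
    have ht : (tQ • P' - 1)ᵀ = tQ • P'ᵀ - 1 := by
      rw [Matrix.transpose_sub, Matrix.transpose_smul, Matrix.transpose_one]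
    rw [ht, Matrix.sub_mul, Matrix.smul_mul, hPt, Matrix.one_mul, hD, Matrix.mul_sub,
      Matrix.mul_smul, Matrix.mul_one, Matrix.mul_assoc, Matrix.nonsing_inv_mul _ hP'u,
      Matrix.mul_one]
  have hkey : (tQ • P' - 1)ᵀ * (J' * (tQ⁻¹ • P' - 1)⁻¹) = (-tQ) • (J' * P'⁻¹) := by
    rw [← Matrix.mul_assoc, hBJ, hAinv, Matrix.mul_smul, Matrix.mul_assoc,
      Matrix.mul_nonsing_inv _ hDu, Matrix.mul_one]
  -- part (i), equality
  have dot1 : ((tQ • P' - 1).mulVec x) ⬝ᵥ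
        (J' * (tQ⁻¹ • P' - 1)⁻¹).mulVec (fun i => conjQ (w i)) =
      -tQ * (x ⬝ᵥ (J' * P'⁻¹).mulVec (fun i => conjQ (w i))) := by
    have vsmul : ∀ (c : RatFunc ℚ) (M : Matrix (Fin k) (Fin k) (RatFunc ℚ))
        (u : Fin k → RatFunc ℚ), u ᵥ* (c • M) = c • (u ᵥ* M) := by
      intro c M u
      ext i
      simp only [Matrix.vecMul, dotProduct, Matrix.smul_apply, Pi.smul_apply,
        smul_eq_mul, Finset.mul_sum]
      exact Finset.sum_congr rfl fun j _ => by ring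
    rw [← Matrix.vecMul_transpose, Matrix.dotProduct_mulVec, Matrix.vecMul_vecMul, hkey,
      vsmul, smul_dotProduct, smul_eq_mul, Matrix.dotProduct_mulVec, neg_mul]
  -- inverse of P' as an integer matrix
  have hP'inv : P'⁻¹ = (P⁻¹).map (Int.cast : ℤ → RatFunc ℚ) := by
    apply Matrix.inv_eq_right_inv
    rw [hP', ← mapmul, Matrix.mul_nonsing_inv P hPu]
    exact Matrix.map_one _ Int.cast_zero Int.cast_one
  -- part (i), membership
  have mem1 : ((tQ • P' - 1).mulVec x) ⬝ᵥ
      (J' * (tQ⁻¹ • P' - 1)⁻¹).mulVec (fun i => conjQ (w i)) ∈ Lam := by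
    rw [dot1]
    have hJP : J' * P'⁻¹ = (J * P⁻¹).map (Int.cast : ℤ → RatFunc ℚ) := by
      rw [hJ', hP'inv, mapmul]
    rw [hJP, neg_mul]
    exact Subring.neg_mem _ (Subring.mul_mem _ tQ_mem
      (dot_mem hx (mulVec_map_mem _ (fun i => conjQ_mem (hw i)))))
  -- conjugation of (tP-1)y
  have hconj : (fun i => conjQ (((tQ • P' - 1).mulVec y) i)) =
      (tQ⁻¹ • P' - 1).mulVec (fun i => conjQ (y i)) := by
    funext i
    show conjQ (((tQ • P' - 1) i) ⬝ᵥ y) = ((tQ⁻¹ • P' - 1) i) ⬝ᵥ (fun i => conjQ (y i))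
    rw [conjQ_eq]
    rw [dotProduct, dotProduct, map_sum]
    refine Finset.sum_congr rfl fun j _ => ?_
    rw [_root_.map_mul]
    congr 1
    · simp only [Matrix.sub_apply, Matrix.smul_apply, smul_eq_mul, hP', Matrix.map_apply]
      rw [_root_.map_sub, _root_.map_mul, sig_tQ, map_intCast]
      congr 1
      by_cases h : i = j
      · subst h; simp [Matrix.one_apply_eq]
      · simp [Matrix.one_apply_ne h]
    · exact (conjQ_eq _).symm
  -- part (ii), equality
  have dot2 : v ⬝ᵥ (J' * (tQ⁻¹ • P' - 1)⁻¹).mulVec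
        (fun i => conjQ (((tQ • P' - 1).mulVec y) i)) =
      v ⬝ᵥ J'.mulVec (fun i => conjQ (y i)) := by
    rw [hconj, Matrix.mulVec_mulVec, Matrix.mul_assoc, Matrix.nonsing_inv_mul _ hAdet,
      Matrix.mul_one]
  -- part (ii), membership
  have mem2 : v ⬝ᵥ (J' * (tQ⁻¹ • P' - 1)⁻¹).mulVec
      (fun i => conjQ (((tQ • P' - 1).mulVec y) i)) ∈ Lam := by
    rw [dot2, hJ']
    exact dot_mem hv (mulVec_map_mem _ (fun i => conjQ_mem (hy i)))
  exact ⟨dot1, mem1, dot2, mem2⟩
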